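/- Let d ≥ 1 be a natural number and let a : ℕ → ℝ be coefficients with a_i ≥ 0 for all i ≤ d and a_d > 0; let P(x) := Σ_{i=0}^{d} a_i x^i. Let n and r be real numbers with n ≥ 1 and r ≥ 1, and let ρ_G > 0 and ρ_DD > 0 be real numbers. Define the scale-up factor Sc := (ρ_G · P(r·n)) / (ρ_DD · r · P(n)) and α := (P(r·n) · n^d) / (P(n) · (r·n)^d). Then P(n) > 0, Sc = (ρ_G/ρ_DD) · α · r^{d−1}, and 0 < α ≤ 1; in particular Sc ≥ (ρ_G/ρ_DD) · α · r^{d−1}. -/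
import Mathlib


/-- The DD-4D-Var scale-up factor: `Sc = (ρ_G/ρ_DD) · α · r^(d-1)` with `0 < α ≤ 1`. -/
theorem stmt3 (d : ℕ) (hd : 1 ≤ d) (a : ℕ → ℝ) (ha : ∀ i ≤ d, 0 ≤ a i) (had : 0 < a d)
    (n r : ℝ) (hn : 1 ≤ n) (hr : 1 ≤ r)
    (ρG ρDD : ℝ) (hρG : 0 < ρG) (hρDD : 0 < ρDD) :
    let P : ℝ → ℝ := fun x => ∑ i ∈ Finset.range (d + 1), a i * x ^ i
    let Sc : ℝ := ρG * P (r * n) / (ρDD * r * P n)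
    let α : ℝ := P (r * n) * n ^ d / (P n * (r * n) ^ d)
    0 < P n ∧ Sc = (ρG / ρDD) * α * r ^ (d - 1) ∧ (0 < α ∧ α ≤ 1) ∧
      (ρG / ρDD) * α * r ^ (d - 1) ≤ Sc := by
  intro P Sc α
  have hn0 : (0:ℝ) < n := lt_of_lt_of_le one_pos hn
  have hr0 : (0:ℝ) < r := lt_of_lt_of_le one_pos hr
  have hPpos : ∀ x : ℝ, 0 < x → 0 < P x := by
    intro x hx
    apply Finset.sum_pos'
    · intro i hi
      exact mul_nonneg (ha i (Nat.lt_succ_iff.mp (Finset.mem_range.mp hi)))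
        (pow_nonneg hx.le i)
    · exact ⟨d, Finset.self_mem_range_succ d, mul_pos had (pow_pos hx d)⟩
  have hPn : 0 < P n := hPpos n hn0
  have hPrn : 0 < P (r * n) := hPpos (r * n) (mul_pos hr0 hn0)
  have hαpos : 0 < α :=
    div_pos (mul_pos hPrn (pow_pos hn0 d))
      (mul_pos hPn (pow_pos (mul_pos hr0 hn0) d))
  have hαle : α ≤ 1 := by
    rw [div_le_one (mul_pos hPn (pow_pos (mul_pos hr0 hn0) d))]
    show (∑ i ∈ Finset.range (d+1), a i * (r*n)^i) * n^d ≤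
      (∑ i ∈ Finset.range (d+1), a i * n^i) * (r*n)^d
    rw [Finset.sum_mul, Finset.sum_mul]
    apply Finset.sum_le_sum
    intro i hi
    have hi' : i ≤ d := Nat.lt_succ_iff.mp (Finset.mem_range.mp hi)
    have hri : r ^ i ≤ r ^ d := pow_le_pow_right₀ hr hi'
    have hai : 0 ≤ a i := ha i hi'
    have hnp : (0:ℝ) ≤ n ^ i * n ^ d := mul_nonneg (pow_nonneg hn0.le i) (pow_nonneg hn0.le d)
    calc a i * (r*n)^i * n^d = a i * (n^i * n^d) * r^i := by rw [mul_pow]; ring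
      _ ≤ a i * (n^i * n^d) * r^d := by
          apply mul_le_mul_of_nonneg_left hri (mul_nonneg hai hnp)
      _ = a i * n^i * (r*n)^d := by rw [mul_pow]; ring
  obtain ⟨k, rfl⟩ : ∃ k, d = k + 1 := ⟨d - 1, (Nat.succ_pred_eq_of_pos hd).symm⟩
  have heq : Sc = (ρG / ρDD) * α * r ^ (k + 1 - 1) := by
    show ρG * P (r*n) / (ρDD * r * P n)
      = (ρG / ρDD) * (P (r*n) * n^(k+1) / (P n * (r*n)^(k+1))) * r ^ (k+1-1)
    have : k + 1 - 1 = k := rfl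
    rw [this, mul_pow]
    field_simp
    ring
  exact ⟨hPn, heq, ⟨hαpos, hαle⟩, heq.ge⟩
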